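/- There exist a natural number T̄ and a constant ε > 0 such that for every natural number T and all integers s, t satisfying T̄ < t, t < T/2 and (2/3)·T < s, one has ρ(s,t) ≤ 1 − ε. -/

import Mathlib

open Finset MeasureTheory ProbabilityTheory

/-- `V r t` is the variance of `S_t = Z_1 + … + Z_t` for a centered stationary sequence
with covariance function `r`. -/
noncomputable def V (r : ℤ → ℝ) (t : ℕ) : ℝ :=
  (t : ℝ) * r 0 + 2 * ∑ i ∈ Finset.Icc 2 t, ∑ j ∈ Finset.Icc 1 (i - 1), r ((i : ℤ) - (j : ℤ))

/-- `Cst r s t` is the covariance `cov(S_s - S_t, S_t)` of the partial-sum process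
of a centered stationary sequence with covariance function `r`. -/
noncomputable def Cst (r : ℤ → ℝ) (s t : ℕ) : ℝ :=
  ∑ i ∈ Finset.Icc (t + 1) s, ∑ j ∈ Finset.Icc 1 t, r ((i : ℤ) - (j : ℤ))

section AuxPourRho
open Real

lemma bern_neg {y p : ℝ} (hy : 0 < y) (hp1 : -1 ≤ p) (hp0 : p ≤ 0) :
    1 + p * (y - 1) ≤ y ^ p := by
  have ha0 : 0 ≤ -p := by linarith
  have ha1 : -p ≤ 1 := by linarith
  have hpos : 0 < 1 + (-p) * (y - 1) := by
    rcases le_or_gt 1 y with h | h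
    · nlinarith
    · nlinarith
  have hb : y ^ (-p) ≤ 1 + (-p) * (y - 1) := by
    have := rpow_one_add_le_one_add_mul_self (s := y - 1) (by linarith) ha0 ha1
    simpa using this
  have hya : 0 < y ^ (-p) := rpow_pos_of_pos hy _
  have hyp : y ^ p = 1 / y ^ (-p) := by
    rw [one_div, ← rpow_neg hy.le, neg_neg]
  have key : 1 / (1 + (-p) * (y - 1)) ≤ y ^ p := by
    rw [hyp]; exact one_div_le_one_div_of_le hya hb
  have key2 : 1 - (-p) * (y - 1) ≤ 1 / (1 + (-p) * (y - 1)) := by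
    rw [le_div_iff₀ hpos]; nlinarith [sq_nonneg ((-p) * (y - 1))]
  nlinarith

lemma tele_neg {p : ℝ} (hp1 : -1 < p) (hp0 : p < 0) {x : ℝ} (hx : 2 ≤ x) :
    (-p) * x ^ (p - 1) ≤ (x - 1) ^ p - x ^ p := by
  have hx0 : (0:ℝ) < x := by linarith
  have hx1 : (0:ℝ) < x - 1 := by linarith
  have hy : (0:ℝ) < (x - 1) / x := by positivity
  have hb := bern_neg hy hp1.le hp0.le
  have hxp : 0 < x ^ p := rpow_pos_of_pos hx0 p
  have hdiv : ((x - 1) / x) ^ p = (x - 1) ^ p / x ^ p := div_rpow hx1.le hx0.le p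
  rw [hdiv] at hb
  have h2 : (1 + p * ((x - 1) / x - 1)) * x ^ p ≤ (x - 1) ^ p := by
    calc (1 + p * ((x - 1) / x - 1)) * x ^ p ≤ ((x - 1) ^ p / x ^ p) * x ^ p :=
          mul_le_mul_of_nonneg_right hb hxp.le
      _ = (x - 1) ^ p := by field_simp
  have he : (1 + p * ((x - 1) / x - 1)) * x ^ p = x ^ p - p * (x ^ p / x) := by
    field_simp; ring
  rw [he] at h2
  have hsub : x ^ (p - 1) = x ^ p / x := by rw [rpow_sub hx0, rpow_one]
  rw [hsub]; linarith

lemma tele_pos {q : ℝ} (hq0 : 0 < q) (hq1 : q ≤ 1) {x : ℝ} (hx : 1 ≤ x) :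
    q * x ^ (q - 1) ≤ x ^ q - (x - 1) ^ q := by
  have hx0 : (0:ℝ) < x := by linarith
  have hx1 : (0:ℝ) ≤ x - 1 := by linarith
  have hyn : (0:ℝ) ≤ (x - 1) / x := by positivity
  have hb := rpow_one_add_le_one_add_mul_self (s := (x-1)/x - 1) (by linarith) hq0.le hq1
  have hdiv : ((x - 1) / x) ^ q = (x - 1) ^ q / x ^ q := div_rpow hx1 hx0.le q
  rw [show (1 : ℝ) + ((x-1)/x - 1) = (x-1)/x by ring, hdiv] at hb
  have hxq : 0 < x ^ q := rpow_pos_of_pos hx0 q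
  have h2 : (x - 1) ^ q ≤ (1 + q * ((x - 1) / x - 1)) * x ^ q := by
    calc (x - 1) ^ q = ((x - 1) ^ q / x ^ q) * x ^ q := by field_simp
      _ ≤ (1 + q * ((x - 1) / x - 1)) * x ^ q := mul_le_mul_of_nonneg_right hb hxq.le
  have he : (1 + q * ((x - 1) / x - 1)) * x ^ q = x ^ q - q * (x ^ q / x) := by
    field_simp; ring
  rw [he] at h2
  have hsub : x ^ (q - 1) = x ^ q / x := by rw [rpow_sub hx0, rpow_one]
  rw [hsub]; linarith
lemma sum_rpow_le {p : ℝ} (hp1 : -1 < p) (hp0 : p < 0) (n : ℕ) :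
    (p+1) * ∑ i ∈ Finset.Icc 1 n, (i:ℝ) ^ p ≤ (n:ℝ) ^ (p+1) := by
  have hq0 : 0 < p + 1 := by linarith
  induction n with
  | zero => simp [Real.zero_rpow hq0.ne']
  | succ n ih =>
    rw [Finset.sum_Icc_succ_top (by omega)]
    have hn0 : (0:ℝ) ≤ (n:ℝ) := Nat.cast_nonneg n
    have ht := tele_pos hq0 (by linarith) (by linarith : (1:ℝ) ≤ (n:ℝ) + 1)
    rw [show ((n:ℝ) + 1) - 1 = (n:ℝ) by ring, show p + 1 - 1 = p by ring] at ht
    have h1 : ((n+1:ℕ):ℝ) ^ p = ((n:ℝ)+1) ^ p := by push_cast; ring_nf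
    have h2 : ((n+1:ℕ):ℝ) ^ (p+1) = ((n:ℝ)+1) ^ (p+1) := by push_cast; ring_nf
    rw [h2]
    rw [mul_add, h1]
    linarith

lemma tail_rpow_le {χ : ℝ} (hχ2 : -2 < χ) (hχ1 : χ < -1) (n : ℤ) (hn : 1 ≤ n) (N : ℤ) :
    (-(χ+1)) * ∑ m ∈ Finset.Icc (n+1) N, (m:ℝ) ^ χ ≤ (n:ℝ) ^ (χ+1) := by
  have hp1 : -1 < χ + 1 := by linarith
  have hp0 : χ + 1 < 0 := by linarith
  have hnp : (0:ℝ) < (n:ℝ) ^ (χ+1) := rpow_pos_of_pos (by exact_mod_cast hn) _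
  rcases le_or_gt N n with h | h
  · rw [Finset.Icc_eq_empty (by omega)]
    simp; positivity
  have key : ∀ M : ℤ, n ≤ M →
      (-(χ+1)) * ∑ m ∈ Finset.Icc (n+1) M, (m:ℝ) ^ χ
        ≤ (n:ℝ) ^ (χ+1) - (M:ℝ) ^ (χ+1) := by
    refine fun M hM => Int.le_induction (motive := fun M _ => -(χ+1) * ∑ m ∈ Finset.Icc (n+1) M, (m:ℝ) ^ χ ≤ (n:ℝ) ^ (χ+1) - (M:ℝ) ^ (χ+1)) ?_ ?_ M hM
    · rw [Finset.Icc_eq_empty (by omega)]; simp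
    · intro M hM ih
      have hins : Finset.Icc (n+1) (M+1) = insert (M+1) (Finset.Icc (n+1) M) := by
        ext x; simp only [Finset.mem_Icc, Finset.mem_insert]; omega
      rw [hins, Finset.sum_insert (by simp only [Finset.mem_Icc]; omega)]
      have hM1 : (1:ℝ) ≤ (M:ℝ) := by exact_mod_cast hn.trans hM
      have ht := tele_neg hp1 hp0 (by linarith : (2:ℝ) ≤ (M:ℝ) + 1)
      rw [show ((M:ℝ) + 1) - 1 = (M:ℝ) by ring, show χ + 1 - 1 = χ by ring] at ht
      have hMc : ((M+1:ℤ):ℝ) = (M:ℝ) + 1 := by push_cast; ring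
      rw [hMc]
      rw [mul_add]
      linarith
  have := key N h.le
  have hNp : (0:ℝ) ≤ (N:ℝ) ^ (χ+1) :=
    rpow_nonneg (by exact_mod_cast (by omega : (0:ℤ) ≤ N)) _
  linarith
lemma sum_Icc_int (r : ℤ → ℝ) (hEven : ∀ t, r (-t) = r t) (i : ℕ) :
    ∑ k ∈ Finset.Icc (-(i:ℤ)) (i:ℤ), r k = r 0 + 2 * ∑ k ∈ Finset.Icc 1 i, r ((k:ℕ):ℤ) := by
  induction i with
  | zero => simp
  | succ i ih =>
    have h1 : Finset.Icc (-(i+1:ℕ):ℤ) ((i+1:ℕ):ℤ)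
        = insert (-(i+1:ℕ):ℤ) (insert ((i+1:ℕ):ℤ) (Finset.Icc (-(i:ℕ):ℤ) (i:ℕ))) := by
      ext x; simp only [Finset.mem_Icc, Finset.mem_insert]; push_cast; omega
    rw [h1, Finset.sum_insert (by simp only [Finset.mem_insert, Finset.mem_Icc]; push_cast; omega),
      Finset.sum_insert (by simp only [Finset.mem_Icc]; push_cast; omega), ih,
      Finset.sum_Icc_succ_top (by omega)]
    have : r (-(i+1:ℕ):ℤ) = r ((i+1:ℕ):ℤ) := hEven _
    rw [this]; push_cast; ring

lemma inner_reindex (r : ℤ → ℝ) (i t : ℕ) (h : t < i) :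
    ∑ j ∈ Finset.Icc 1 t, r ((i:ℤ) - (j:ℤ))
      = ∑ k ∈ Finset.Icc ((i:ℤ) - t) ((i:ℤ) - 1), r k := by
  refine Finset.sum_nbij' (fun j => (i:ℤ) - (j:ℕ)) (fun k => ((i:ℤ) - k).toNat) ?_ ?_ ?_ ?_ ?_
  · intro a ha; simp only [Finset.mem_Icc] at *; omega
  · intro a ha; simp only [Finset.mem_Icc] at *; omega
  · intro a ha; simp only [Finset.mem_Icc] at ha; omega
  · intro a ha; simp only [Finset.mem_Icc] at ha; omega
  · intro a ha; rfl

lemma inner_reindex2 (r : ℤ → ℝ) (i : ℕ) (h : 2 ≤ i) :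
    ∑ j ∈ Finset.Icc 1 (i-1), r ((i:ℤ) - (j:ℤ))
      = ∑ k ∈ Finset.Icc 1 (i-1), r ((k:ℕ):ℤ) := by
  refine Finset.sum_nbij' (fun j => i - j) (fun k => i - k) ?_ ?_ ?_ ?_ ?_
  · intro a ha; simp only [Finset.mem_Icc] at *; omega
  · intro a ha; simp only [Finset.mem_Icc] at *; omega
  · intro a ha; simp only [Finset.mem_Icc] at ha; omega
  · intro a ha; simp only [Finset.mem_Icc] at ha; omega
  · intro a ha; simp only [Finset.mem_Icc] at ha
    congr 1; push_cast [Nat.cast_sub (by omega : a ≤ i)]; ring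

lemma V_eq (r : ℤ → ℝ) (t : ℕ) (ht : 1 ≤ t) :
    V r t = ∑ i ∈ Finset.range t, (r 0 + 2 * ∑ k ∈ Finset.Icc 1 i, r ((k:ℕ):ℤ)) := by
  have h1 : ∀ i ∈ Finset.Icc 2 t, ∑ j ∈ Finset.Icc 1 (i-1), r ((i:ℤ) - (j:ℤ))
      = ∑ k ∈ Finset.Icc 1 (i-1), r ((k:ℕ):ℤ) := by
    intro i hi; simp only [Finset.mem_Icc] at hi; exact inner_reindex2 r i hi.1
  rw [V, Finset.sum_congr rfl h1]
  have h2 : ∑ i ∈ Finset.Icc 2 t, ∑ k ∈ Finset.Icc 1 (i-1), r ((k:ℕ):ℤ)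
      = ∑ m ∈ Finset.Icc 1 (t-1), ∑ k ∈ Finset.Icc 1 m, r ((k:ℕ):ℤ) := by
    refine Finset.sum_nbij' (fun i => i - 1) (fun m => m + 1) ?_ ?_ ?_ ?_ ?_
    · intro a ha; simp only [Finset.mem_Icc] at *; omega
    · intro a ha; simp only [Finset.mem_Icc] at *; omega
    · intro a ha; simp only [Finset.mem_Icc] at ha; omega
    · intro a ha; simp only [Finset.mem_Icc] at ha; omega
    · intro a ha; rfl
  rw [h2]
  have h3 : Finset.range t = insert 0 (Finset.Icc 1 (t-1)) := by
    ext x; simp only [Finset.mem_range, Finset.mem_insert, Finset.mem_Icc]; omega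
  rw [h3, Finset.sum_insert (by simp only [Finset.mem_Icc]; omega)]
  rw [Finset.sum_add_distrib, Finset.sum_const, Finset.mul_sum]
  simp only [Finset.Icc_self, Finset.Icc_eq_empty_of_lt (by omega : (0:ℕ) < 1)]
  simp only [Finset.sum_empty, mul_zero, add_zero]
  rw [Nat.card_Icc]
  have : (t - 1 + 1 - 1 : ℕ) = t - 1 := by omega
  rw [this]
  have : ((t-1:ℕ):ℝ) = (t:ℝ) - 1 := by push_cast [Nat.cast_sub ht]; ring
  simp only [nsmul_eq_mul, this]
  ring
lemma tail_abs (r : ℤ → ℝ) (hEven : ∀ t, r (-t) = r t)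
    (hAbsSum : Summable fun t : ℤ => |r t|)
    {L χ : ℝ} (hχ2 : -2 < χ) (hχ1 : χ < -1) (hL : 0 ≤ L)
    (T0 : ℕ) (habs : ∀ k : ℤ, (T0:ℤ) ≤ k → |r k| ≤ L * (k:ℝ)^χ)
    (i : ℕ) (hi : T0 ≤ i) (h1 : 1 ≤ i) :
    ∑' (k : ↑(↑(Finset.Icc (-(i:ℤ)) (i:ℤ)) : Set ℤ)ᶜ), |r ↑k|
      ≤ 2*L/(-(χ+1)) * (i:ℝ)^(χ+1) := by
  have hp : (0:ℝ) < -(χ+1) := by linarith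
  set S : Set ℤ := (↑(Finset.Icc (-(i:ℤ)) (i:ℤ)) : Set ℤ)ᶜ with hS
  apply Summable.tsum_le_of_sum_le (hAbsSum.subtype _)
  intro F
  simp only [Function.comp]
  set N : ℕ := F.sup (fun x => (x.1).natAbs) with hN
  have hmem : ∀ x : S, x ∈ F → ((i:ℤ) < x.1 ∨ x.1 < -(i:ℤ)) ∧ x.1.natAbs ≤ N := by
    intro x hx
    constructor
    · have := x.2
      simp only [hS, Set.mem_compl_iff, Finset.coe_Icc, Set.mem_Icc] at this
      omega
    · exact Finset.le_sup (f := fun x : S => (x.1).natAbs) hx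
  -- bound on the Icc sum
  have hIcc : ∑ m ∈ Finset.Icc ((i:ℤ)+1) (N:ℤ), |r m| ≤ L * ((i:ℝ)^(χ+1) / (-(χ+1))) := by
    calc ∑ m ∈ Finset.Icc ((i:ℤ)+1) (N:ℤ), |r m|
        ≤ ∑ m ∈ Finset.Icc ((i:ℤ)+1) (N:ℤ), L * (m:ℝ)^χ := by
          apply Finset.sum_le_sum
          intro m hm
          simp only [Finset.mem_Icc] at hm
          exact habs m (by omega)
      _ = L * ∑ m ∈ Finset.Icc ((i:ℤ)+1) (N:ℤ), (m:ℝ)^χ := by rw [Finset.mul_sum]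
      _ ≤ L * ((i:ℝ)^(χ+1) / (-(χ+1))) := by
          apply mul_le_mul_of_nonneg_left _ hL
          rw [le_div_iff₀ hp]
          have := tail_rpow_le hχ2 hχ1 (i:ℤ) (by exact_mod_cast h1) (N:ℤ)
          push_cast at this ⊢
          linarith
  have key : ∑ x ∈ F, |r x.1| ≤ 2 * ∑ m ∈ Finset.Icc ((i:ℤ)+1) (N:ℤ), |r m| := by
    rw [← Finset.sum_filter_add_sum_filter_not F (fun x => 0 ≤ x.1)]
    have h1le : ∑ x ∈ F.filter (fun x => 0 ≤ x.1), |r x.1|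
        ≤ ∑ m ∈ Finset.Icc ((i:ℤ)+1) (N:ℤ), |r m| := by
      rw [← Finset.sum_image (f := fun m => |r m|)
        (g := fun x : S => x.1) (by intro x _ y _ h; exact Subtype.ext h)]
      apply Finset.sum_le_sum_of_subset_of_nonneg
      · intro m hm
        simp only [Finset.mem_image] at hm
        obtain ⟨x, hx, rfl⟩ := hm
        simp only [Finset.mem_filter] at hx
        have := hmem x hx.1
        simp only [Finset.mem_Icc]
        omega
      · intro m _ _; positivity
    have h2le : ∑ x ∈ F.filter (fun x => ¬ 0 ≤ x.1), |r x.1|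
        ≤ ∑ m ∈ Finset.Icc ((i:ℤ)+1) (N:ℤ), |r m| := by
      have heq : ∀ x ∈ F.filter (fun x : S => ¬ 0 ≤ x.1), |r x.1| = |r (-x.1)| := by
        intro x _; rw [hEven]
      rw [Finset.sum_congr rfl heq]
      rw [← Finset.sum_image (f := fun m => |r m|)
        (g := fun x : S => -x.1) (by intro x _ y _ h; exact Subtype.ext (neg_injective h))]
      apply Finset.sum_le_sum_of_subset_of_nonneg
      · intro m hm
        simp only [Finset.mem_image] at hm
        obtain ⟨x, hx, rfl⟩ := hm
        simp only [Finset.mem_filter] at hx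
        have := hmem x hx.1
        simp only [Finset.mem_Icc]
        omega
      · intro m _ _; positivity
    linarith
  calc ∑ x ∈ F, |r x.1| ≤ 2 * ∑ m ∈ Finset.Icc ((i:ℤ)+1) (N:ℤ), |r m| := key
    _ ≤ 2 * (L * ((i:ℝ)^(χ+1) / (-(χ+1)))) := by linarith
    _ = 2*L/(-(χ+1)) * (i:ℝ)^(χ+1) := by field_simp

end AuxPourRho

set_option maxHeartbeats 2000000

open Real in
theorem rho_le_one_sub_eps
    (r : ℤ → ℝ) (hEven : ∀ t : ℤ, r (-t) = r t)
    (hAbsSum : Summable fun t : ℤ => |r t|)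
    (hSumZero : ∑' t : ℤ, r t = 0)
    (T0 : ℕ) (hT0 : 2 ≤ T0)
    (J1 J2 χ : ℝ) (hJ12 : J1 ≤ J2) (hJ2 : J2 < 0)
    (hχ : χ ∈ Set.Ioo (-2 : ℝ) (-1))
    (hbound : ∀ t : ℤ, (T0 : ℤ) ≤ t →
      J1 * (t : ℝ) ^ χ ≤ r t ∧ r t ≤ J2 * (t : ℝ) ^ χ)
    (H : ℝ) (hH : H = χ / 2 + 1)
    (hVpos : ∀ t : ℕ, 1 ≤ t → 0 < V r t) :
    ∃ (Tbar : ℕ) (ε : ℝ), 0 < ε ∧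
      ∀ T s t : ℕ, Tbar < t → (t : ℝ) < (T : ℝ) / 2 → (2 / 3 : ℝ) * (T : ℝ) < (s : ℝ) →
        Cst r s t / V r t + 1 ≤ 1 - ε := by
  obtain ⟨hχ2, hχ1⟩ := hχ
  have hSum : Summable r := by
    apply Summable.of_abs hAbsSum
  set R : ℝ := ∑' t : ℤ, |r t| with hR
  have hR0 : 0 ≤ R := tsum_nonneg (fun _ => abs_nonneg _)
  set L : ℝ := -J1 with hL
  set K : ℝ := -J2 with hK
  have hK0 : 0 < K := by simp [hK]; linarith
  have hL0 : 0 < L := by simp [hL]; linarith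
  have hq0 : (0:ℝ) < χ + 2 := by linarith
  have hq1 : χ + 2 ≤ 1 := by linarith
  have hp0 : χ + 1 < 0 := by linarith
  have hp1 : -1 < χ + 1 := by linarith
  -- pointwise bounds on r
  have habs : ∀ k : ℤ, (T0:ℤ) ≤ k → |r k| ≤ L * (k:ℝ)^χ := by
    intro k hk
    obtain ⟨h1, h2⟩ := hbound k hk
    have hk0 : (0:ℝ) < (k:ℝ) := by
      have : (0:ℤ) < k := by omega
      exact_mod_cast this
    have hkχ : (0:ℝ) < (k:ℝ)^χ := rpow_pos_of_pos hk0 χ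
    rw [abs_le]
    constructor
    · simp only [hL]; nlinarith
    · nlinarith
  have hrneg : ∀ k : ℤ, (T0:ℤ) ≤ k → r k ≤ J2 * (k:ℝ)^χ := fun k hk => (hbound k hk).2
  -- bound on the partial sums of r (the quantity D i)
  set D : ℕ → ℝ := fun i => r 0 + 2 * ∑ k ∈ Finset.Icc 1 i, r ((k:ℕ):ℤ) with hD
  have hDfin : ∀ i : ℕ, D i = ∑ k ∈ Finset.Icc (-(i:ℤ)) (i:ℤ), r k :=
    fun i => (sum_Icc_int r hEven i).symm
  have hDleR : ∀ i : ℕ, D i ≤ R := by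
    intro i
    rw [hDfin]
    calc ∑ k ∈ Finset.Icc (-(i:ℤ)) (i:ℤ), r k
        ≤ ∑ k ∈ Finset.Icc (-(i:ℤ)) (i:ℤ), |r k| :=
          Finset.sum_le_sum (fun k _ => le_abs_self _)
      _ ≤ R := Summable.sum_le_tsum _ (fun _ _ => abs_nonneg _) hAbsSum
  set CE : ℝ := 2*L/(-(χ+1)) with hCE
  have hCE0 : 0 < CE := by
    apply div_pos (by linarith) (by linarith)
  have hDle : ∀ i : ℕ, T0 ≤ i → D i ≤ CE * (i:ℝ)^(χ+1) := by
    intro i hi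
    have hsplit := Summable.sum_add_tsum_compl (s := Finset.Icc (-(i:ℤ)) (i:ℤ)) hSum
    rw [hSumZero] at hsplit
    have heq : D i = - ∑' (k : ↑(↑(Finset.Icc (-(i:ℤ)) (i:ℤ)) : Set ℤ)ᶜ), r ↑k := by
      rw [hDfin]; linarith
    have habs2 : |∑' (k : ↑(↑(Finset.Icc (-(i:ℤ)) (i:ℤ)) : Set ℤ)ᶜ), r ↑k|
        ≤ ∑' (k : ↑(↑(Finset.Icc (-(i:ℤ)) (i:ℤ)) : Set ℤ)ᶜ), |r ↑k| := by
      have := norm_tsum_le_tsum_norm (f := fun k : ↑(↑(Finset.Icc (-(i:ℤ)) (i:ℤ)) : Set ℤ)ᶜ => r ↑k)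
        (by simp only [Real.norm_eq_abs]; exact hAbsSum.subtype _)
      simpa [Real.norm_eq_abs] using this
    have htail := tail_abs r hEven hAbsSum hχ2 hχ1 hL0.le T0 habs i hi (by omega)
    rw [heq]
    calc - ∑' (k : ↑(↑(Finset.Icc (-(i:ℤ)) (i:ℤ)) : Set ℤ)ᶜ), r ↑k
        ≤ |∑' (k : ↑(↑(Finset.Icc (-(i:ℤ)) (i:ℤ)) : Set ℤ)ᶜ), r ↑k| := neg_le_abs _
      _ ≤ ∑' (k : ↑(↑(Finset.Icc (-(i:ℤ)) (i:ℤ)) : Set ℤ)ᶜ), |r ↑k| := habs2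
      _ ≤ CE * (i:ℝ)^(χ+1) := htail
  -- upper bound for V
  have hVle : ∀ t : ℕ, 1 ≤ t → V r t ≤ (T0:ℝ) * R + CE/(χ+2) * (t:ℝ)^(χ+2) := by
    intro t ht
    have ht0 : (0:ℝ) < (t:ℝ) := by exact_mod_cast ht
    rw [V_eq r t ht]
    have hVD : ∑ i ∈ Finset.range t, D i
        = ∑ i ∈ (Finset.range t).filter (fun i => i < T0), D i
          + ∑ i ∈ (Finset.range t).filter (fun i => ¬ i < T0), D i :=
      (Finset.sum_filter_add_sum_filter_not _ _ _).symm
    have h1 : ∑ i ∈ (Finset.range t).filter (fun i => i < T0), D i ≤ (T0:ℝ) * R := by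
      calc ∑ i ∈ (Finset.range t).filter (fun i => i < T0), D i
          ≤ ((Finset.range t).filter (fun i => i < T0)).card • R :=
            Finset.sum_le_card_nsmul _ _ _ (fun i _ => hDleR i)
        _ ≤ (T0:ℝ) * R := by
            rw [nsmul_eq_mul]
            apply mul_le_mul_of_nonneg_right _ hR0
            have : ((Finset.range t).filter (fun i => i < T0)).card ≤ T0 := by
              have hsub : (Finset.range t).filter (fun i => i < T0) ⊆ Finset.range T0 := by
                intro x hx; simp only [Finset.mem_filter, Finset.mem_range] at *; omega
              simpa using Finset.card_le_card hsub
            exact_mod_cast this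
    have h2 : ∑ i ∈ (Finset.range t).filter (fun i => ¬ i < T0), D i
        ≤ CE/(χ+2) * (t:ℝ)^(χ+2) := by
      calc ∑ i ∈ (Finset.range t).filter (fun i => ¬ i < T0), D i
          ≤ ∑ i ∈ (Finset.range t).filter (fun i => ¬ i < T0), CE * (i:ℝ)^(χ+1) :=
            Finset.sum_le_sum (fun i hi => by
              simp only [Finset.mem_filter, Finset.mem_range, not_lt] at hi
              exact hDle i hi.2)
        _ ≤ ∑ i ∈ Finset.Icc 1 (t-1), CE * (i:ℝ)^(χ+1) := by
            apply Finset.sum_le_sum_of_subset_of_nonneg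
            · intro x hx
              simp only [Finset.mem_filter, Finset.mem_range, not_lt, Finset.mem_Icc] at *
              omega
            · intro i _ _
              have : (0:ℝ) ≤ (i:ℝ)^(χ+1) := rpow_nonneg (Nat.cast_nonneg i) _
              positivity
        _ = CE * ∑ i ∈ Finset.Icc 1 (t-1), (i:ℝ)^(χ+1) := by rw [← Finset.mul_sum]
        _ ≤ CE/(χ+2) * (t:ℝ)^(χ+2) := by
            have hs := sum_rpow_le hp1 hp0 (t-1)
            rw [show χ + 1 + 1 = χ + 2 by ring] at hs
            have hmono : ((t-1:ℕ):ℝ)^(χ+2) ≤ (t:ℝ)^(χ+2) := by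
              apply Real.rpow_le_rpow (Nat.cast_nonneg _) _ hq0.le
              exact_mod_cast Nat.sub_le t 1
            have hSS : ∑ i ∈ Finset.Icc 1 (t-1), (i:ℝ)^(χ+1) ≤ (t:ℝ)^(χ+2)/(χ+2) := by
              rw [le_div_iff₀ hq0]; nlinarith
            calc CE * ∑ i ∈ Finset.Icc 1 (t-1), (i:ℝ)^(χ+1)
                ≤ CE * ((t:ℝ)^(χ+2)/(χ+2)) := mul_le_mul_of_nonneg_left hSS hCE0.le
              _ = CE/(χ+2) * (t:ℝ)^(χ+2) := by ring
    have hfold : ∑ i ∈ Finset.range t, (r 0 + 2 * ∑ k ∈ Finset.Icc 1 i, r ((k:ℕ):ℤ))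
        = ∑ i ∈ Finset.range t, D i := rfl
    rw [hfold, hVD]
    linarith
  -- upper bound for Cst
  set c2 : ℝ := K * (2:ℝ)^χ / 6 with hc2
  have hc20 : 0 < c2 := by
    apply div_pos (mul_pos hK0 (Real.rpow_pos_of_pos two_pos χ)) (by norm_num)
  have hCle : ∀ s t : ℕ, 12*(T0+1) ≤ t → (t:ℝ) * (4/3) < (s:ℝ) →
      Cst r s t ≤ (T0:ℝ) * R - c2 * (t:ℝ)^(χ+2) := by
    intro s t htT hst
    have ht1 : 1 ≤ t := by omega
    have ht0 : (0:ℝ) < (t:ℝ) := by exact_mod_cast ht1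
    set u : ℕ := (4*t)/3 with hu
    have hucast : (u:ℝ) ≤ 4*(t:ℝ)/3 := by
      calc (u:ℝ) ≤ ((4*t:ℕ):ℝ)/(3:ℝ) := Nat.cast_div_le
        _ = 4*(t:ℝ)/3 := by push_cast; ring
    have hus : u ≤ s := by
      have : (u:ℝ) < (s:ℝ) := lt_of_le_of_lt hucast (by linarith)
      exact_mod_cast this.le
    have hau : t + T0 - 1 ≤ u := by omega
    have hta : t ≤ t + T0 - 1 := by omega
    have hu2t : u ≤ 2*t := by omega
    have hcard : (t:ℝ)/6 ≤ ((u - (t + T0 - 1) : ℕ):ℝ) := by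
      have h6 : 6*(u - (t + T0 - 1)) ≥ t := by omega
      have : ((u - (t + T0 - 1):ℕ):ℝ) ≥ (t:ℝ)/6 := by
        rw [ge_iff_le, div_le_iff₀ (by norm_num : (0:ℝ) < 6)]
        exact_mod_cast by omega
      linarith
    -- rewrite Cst as a sum of inner sums g i
    set g : ℕ → ℝ := fun i => ∑ k ∈ Finset.Icc ((i:ℤ) - t) ((i:ℤ) - 1), r k with hg
    have hCeq : Cst r s t = ∑ i ∈ Finset.Ioc t s, g i := by
      rw [Cst, ← Finset.Icc_add_one_left_eq_Ioc]
      apply Finset.sum_congr rfl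
      intro i hi
      simp only [Finset.mem_Icc] at hi
      exact inner_reindex r i t (by omega)
    rw [hCeq]
    have hsplit1 : ∑ i ∈ Finset.Ioc t (t + T0 - 1), g i + ∑ i ∈ Finset.Ioc (t + T0 - 1) s, g i
        = ∑ i ∈ Finset.Ioc t s, g i :=
      Finset.sum_Ioc_consecutive _ hta (le_trans hau hus)
    have hsplit2 : ∑ i ∈ Finset.Ioc (t + T0 - 1) u, g i + ∑ i ∈ Finset.Ioc u s, g i
        = ∑ i ∈ Finset.Ioc (t + T0 - 1) s, g i :=
      Finset.sum_Ioc_consecutive _ hau hus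
    -- bound on the first part
    have hb1 : ∑ i ∈ Finset.Ioc t (t + T0 - 1), g i ≤ (T0:ℝ) * R := by
      calc ∑ i ∈ Finset.Ioc t (t + T0 - 1), g i
          ≤ (Finset.Ioc t (t + T0 - 1)).card • R := by
            apply Finset.sum_le_card_nsmul
            intro i _
            calc g i ≤ ∑ k ∈ Finset.Icc ((i:ℤ) - t) ((i:ℤ) - 1), |r k| :=
                  Finset.sum_le_sum (fun k _ => le_abs_self _)
              _ ≤ R := Summable.sum_le_tsum _ (fun _ _ => abs_nonneg _) hAbsSum
        _ ≤ (T0:ℝ) * R := by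
            rw [nsmul_eq_mul, Nat.card_Ioc]
            apply mul_le_mul_of_nonneg_right _ hR0
            exact_mod_cast by omega
    -- each g i with i ≥ t + T0 is at most t * (J2 * u^χ) when also i ≤ u
    have hgneg : ∀ i : ℕ, t + T0 ≤ i → ∀ k ∈ Finset.Icc ((i:ℤ) - t) ((i:ℤ) - 1),
        r k ≤ J2 * (k:ℝ)^χ ∧ (T0:ℤ) ≤ k := by
      intro i hi k hk
      simp only [Finset.mem_Icc] at hk
      have hkT : (T0:ℤ) ≤ k := by omega
      exact ⟨hrneg k hkT, hkT⟩
    have hb3 : ∑ i ∈ Finset.Ioc u s, g i ≤ 0 := by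
      apply Finset.sum_nonpos
      intro i hi
      simp only [Finset.mem_Ioc] at hi
      apply Finset.sum_nonpos
      intro k hk
      obtain ⟨h1, h2⟩ := hgneg i (by omega) k hk
      have hk0 : (0:ℝ) < (k:ℝ) := by
        have : (0:ℤ) < k := by omega
        exact_mod_cast this
      have hkχ : (0:ℝ) ≤ (k:ℝ)^χ := Real.rpow_nonneg hk0.le χ
      exact h1.trans (mul_nonpos_of_nonpos_of_nonneg hJ2.le hkχ)
    -- the middle part
    have hu1 : 1 ≤ u := by omega
    have hu0 : (0:ℝ) < (u:ℝ) := by exact_mod_cast hu1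
    have huχ : J2 * (u:ℝ)^χ ≤ J2 * ((2:ℝ)^χ * (t:ℝ)^χ) := by
      have h2t : (u:ℝ) ≤ 2*(t:ℝ) := by
        have : ((2*t:ℕ):ℝ) = 2*(t:ℝ) := by push_cast; ring
        rw [← this]; exact_mod_cast hu2t
      have hmono : ((2:ℝ)*(t:ℝ))^χ ≤ (u:ℝ)^χ :=
        Real.rpow_le_rpow_of_nonpos hu0 h2t (by linarith)
      have hprod : ((2:ℝ)*(t:ℝ))^χ = (2:ℝ)^χ * (t:ℝ)^χ :=
        Real.mul_rpow (by norm_num) ht0.le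
      rw [← hprod]
      exact mul_le_mul_of_nonpos_left hmono hJ2.le
    have hgmid : ∀ i ∈ Finset.Ioc (t + T0 - 1) u, g i ≤ (t:ℝ) * (J2 * (u:ℝ)^χ) := by
      intro i hi
      simp only [Finset.mem_Ioc] at hi
      have hcardi : (Finset.Icc ((i:ℤ) - t) ((i:ℤ) - 1)).card = t := by
        rw [Int.card_Icc]
        omega
      calc g i ≤ (Finset.Icc ((i:ℤ) - t) ((i:ℤ) - 1)).card • (J2 * (u:ℝ)^χ) := by
            apply Finset.sum_le_card_nsmul
            intro k hk
            obtain ⟨h1, h2⟩ := hgneg i (by omega) k hk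
            have hk0 : (0:ℝ) < (k:ℝ) := by
              have : (0:ℤ) < k := by omega
              exact_mod_cast this
            have hku : (k:ℝ) ≤ (u:ℝ) := by
              simp only [Finset.mem_Icc] at hk
              have : k ≤ (u:ℤ) := by omega
              exact_mod_cast this
            have hmono : (u:ℝ)^χ ≤ (k:ℝ)^χ := Real.rpow_le_rpow_of_nonpos hk0 hku (by linarith)
            exact h1.trans (mul_le_mul_of_nonpos_left hmono hJ2.le)
        _ = (t:ℝ) * (J2 * (u:ℝ)^χ) := by rw [hcardi, nsmul_eq_mul]
    have hb2 : ∑ i ∈ Finset.Ioc (t + T0 - 1) u, g i ≤ - c2 * (t:ℝ)^(χ+2) := by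
      have hmidneg : (t:ℝ) * (J2 * (u:ℝ)^χ) ≤ 0 := by
        have : (0:ℝ) ≤ (u:ℝ)^χ := Real.rpow_nonneg hu0.le χ
        have h1 : J2 * (u:ℝ)^χ ≤ 0 := mul_nonpos_of_nonpos_of_nonneg hJ2.le this
        exact mul_nonpos_of_nonneg_of_nonpos ht0.le h1
      have hcard2 : (Finset.Ioc (t + T0 - 1) u).card = u - (t + T0 - 1) := Nat.card_Ioc _ _
      calc ∑ i ∈ Finset.Ioc (t + T0 - 1) u, g i
          ≤ (Finset.Ioc (t + T0 - 1) u).card • ((t:ℝ) * (J2 * (u:ℝ)^χ)) :=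
            Finset.sum_le_card_nsmul _ _ _ hgmid
        _ = ((u - (t + T0 - 1) : ℕ):ℝ) * ((t:ℝ) * (J2 * (u:ℝ)^χ)) := by
            rw [hcard2, nsmul_eq_mul]
        _ ≤ ((t:ℝ)/6) * ((t:ℝ) * (J2 * (u:ℝ)^χ)) :=
            mul_le_mul_of_nonpos_right hcard hmidneg
        _ ≤ ((t:ℝ)/6) * ((t:ℝ) * (J2 * ((2:ℝ)^χ * (t:ℝ)^χ))) := by
            have h6 : (0:ℝ) ≤ (t:ℝ)/6 := by positivity
            apply mul_le_mul_of_nonneg_left _ h6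
            exact mul_le_mul_of_nonneg_left huχ ht0.le
        _ = - c2 * (t:ℝ)^(χ+2) := by
            have hpow : (t:ℝ)^(χ+2) = (t:ℝ)^χ * ((t:ℝ)*(t:ℝ)) := by
              rw [Real.rpow_add ht0, show ((2:ℝ)) = ((2:ℕ):ℝ) by norm_num, Real.rpow_natCast]
              ring
            rw [hpow, hc2, hK]
            ring
    linarith
  -- choose the threshold and epsilon
  set A : ℝ := (T0:ℝ) * R with hA
  have hA0 : 0 ≤ A := mul_nonneg (Nat.cast_nonneg _) hR0
  set B : ℝ := c2/2 + CE/(χ+2) with hB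
  have hB0 : 0 < B := by
    have : 0 < CE/(χ+2) := div_pos hCE0 hq0
    simp only [hB]; linarith
  set ε : ℝ := (c2/2)/B with hε
  have hε0 : 0 < ε := div_pos (by linarith) hB0
  set W : ℝ := (2*A+2)/c2 with hW
  have hW0 : 0 < W := div_pos (by linarith) hc20
  set w : ℝ := W^(1/(χ+2)) with hw
  have hw0 : 0 ≤ w := Real.rpow_nonneg hW0.le _
  clear_value D R L K CE c2 A B ε W w
  refine ⟨max (12*(T0+1)) (Nat.ceil w), ε, hε0, ?_⟩
  intro T s t h1 h2 h3
  have ht12 : 12*(T0+1) ≤ t := by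
    have := le_max_left (12*(T0+1)) (Nat.ceil w)
    omega
  have ht1 : 1 ≤ t := by omega
  have ht0 : (0:ℝ) < (t:ℝ) := by exact_mod_cast ht1
  have htw : w ≤ (t:ℝ) := by
    have h4 : Nat.ceil w ≤ max (12*(T0+1)) (Nat.ceil w) := le_max_right _ _
    have h5 : (Nat.ceil w : ℝ) ≤ (t:ℝ) := by exact_mod_cast by omega
    exact (Nat.le_ceil w).trans h5
  have htq : W ≤ (t:ℝ)^(χ+2) := by
    have hwq : w^(χ+2) = W := by
      rw [hw, ← Real.rpow_mul hW0.le, one_div_mul_cancel hq0.ne', Real.rpow_one]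
    calc W = w^(χ+2) := hwq.symm
      _ ≤ (t:ℝ)^(χ+2) := Real.rpow_le_rpow hw0 htw hq0.le
  have ht34 : (t:ℝ) * (4/3) < (s:ℝ) := by linarith
  have hC := hCle s t ht12 ht34
  have hVt := hVle t ht1
  have hV := hVpos t ht1
  have hWc2 : W * c2 = 2*A+2 := by rw [hW]; exact div_mul_cancel₀ _ hc20.ne'
  have hc2tq : 2*A+2 ≤ c2 * (t:ℝ)^(χ+2) := by
    calc 2*A+2 = W * c2 := hWc2.symm
      _ ≤ (t:ℝ)^(χ+2) * c2 := mul_le_mul_of_nonneg_right htq hc20.le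
      _ = c2 * (t:ℝ)^(χ+2) := by ring
  have hCf : Cst r s t ≤ -((c2/2) * (t:ℝ)^(χ+2)) := by
    have : A - c2 * (t:ℝ)^(χ+2) ≤ -((c2/2) * (t:ℝ)^(χ+2)) := by linarith
    linarith
  have h8 : A + 1 ≤ c2/2 * (t:ℝ)^(χ+2) := by linarith
  have hVf : V r t ≤ B * (t:ℝ)^(χ+2) := by
    have hexp : B * (t:ℝ)^(χ+2) = (c2/2) * (t:ℝ)^(χ+2) + (CE/(χ+2)) * (t:ℝ)^(χ+2) := by
      rw [hB]; ring
    linarith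
  have hεB : ε * B = c2/2 := by rw [hε]; exact div_mul_cancel₀ _ hB0.ne'
  have hdiv : Cst r s t / V r t ≤ -ε := by
    rw [div_le_iff₀ hV]
    have h6 : ε * V r t ≤ ε * (B * (t:ℝ)^(χ+2)) := mul_le_mul_of_nonneg_left hVf hε0.le
    have h7 : ε * (B * (t:ℝ)^(χ+2)) = (c2/2) * (t:ℝ)^(χ+2) := by
      rw [← mul_assoc, hεB]
    nlinarith
  linarith
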